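/- Let f₀ > 0 solve −f₀'' + (t+α₀)² f₀ = (1/b)(1 − f₀²) f₀ on [0,ℓ] with f₀'(0) = f₀'(ℓ) = 0, and let ψ = f₀(t) u(s,t) e^{iΦ} with Φ(s,t) = −α₀ s − st/2 and u ∈ H¹ on the rectangle R = [0,L]×[0,ℓ]. Then the Ginzburg–Landau energy with potential F = (1/2)x^⊥ splits as G[ψ; R] = −(1/(2b))∫_R f₀⁴ + E₀[u; R], where E₀[u;R] = ∫_R f₀² {|∂_t u|² + |∂_s u|² − 2(t+α₀) j_s[u] + (1/(2b)) f₀² (1−|u|²)²} ds dt and j_s[u] = Im(ū ∂_s u). -/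

import Mathlib

open MeasureTheory

/-- Partial derivative in the first (tangential) variable. -/
noncomputable def pdS (ψ : ℝ × ℝ → ℂ) (p : ℝ × ℝ) : ℂ :=
  deriv (fun x => ψ (x, p.2)) p.1

/-- Partial derivative in the second (normal) variable. -/
noncomputable def pdT (ψ : ℝ × ℝ → ℂ) (p : ℝ × ℝ) : ℂ :=
  deriv (fun y => ψ (p.1, y)) p.2

/-- The Ginzburg–Landau energy on the rectangle `[0,L] × [0,ℓ]` with magnetic
potential `F(s,t) = (1/2)(-t, s)`. -/
noncomputable def GLrect (b L ℓ : ℝ) (ψ : ℝ × ℝ → ℂ) : ℝ :=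
  ∫ s in (0:ℝ)..L, ∫ t in (0:ℝ)..ℓ,
    (‖pdS ψ (s, t) + Complex.I * (-(t / 2) : ℝ) * ψ (s, t)‖ ^ 2
      + ‖pdT ψ (s, t) + Complex.I * ((s / 2 : ℝ) : ℂ) * ψ (s, t)‖ ^ 2
      - (1 / (2 * b)) * (2 * ‖ψ (s, t)‖ ^ 2 - ‖ψ (s, t)‖ ^ 4))

/-- The reduced energy `E₀[u; R]`. -/
noncomputable def E0 (b L ℓ α₀ : ℝ) (f₀ : ℝ → ℝ) (u : ℝ × ℝ → ℂ) : ℝ :=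
  ∫ s in (0:ℝ)..L, ∫ t in (0:ℝ)..ℓ,
    f₀ t ^ 2 * (‖pdT u (s, t)‖ ^ 2 + ‖pdS u (s, t)‖ ^ 2
      - 2 * (t + α₀) * ((starRingEnd ℂ) (u (s, t)) * pdS u (s, t)).im
      + (1 / (2 * b)) * f₀ t ^ 2 * (1 - ‖u (s, t)‖ ^ 2) ^ 2)

section helpers

variable {u : ℝ × ℝ → ℂ}

lemma hasDerivAt_slice_s (hu : ContDiff ℝ 1 u) (s t : ℝ) :
    HasDerivAt (fun x => u (x, t)) (pdS u (s, t)) s := by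
  have h := ((hu.differentiable one_ne_zero) (s, t)).hasFDerivAt
  have hl : HasDerivAt (fun x : ℝ => (x, t)) ((1 : ℝ), (0 : ℝ)) s :=
    (hasDerivAt_id s).prodMk (hasDerivAt_const s t)
  have h2 := h.comp_hasDerivAt s hl
  have he : pdS u (s, t) = fderiv ℝ u (s, t) (1, 0) := h2.deriv
  rw [he]; exact h2

lemma hasDerivAt_slice_t (hu : ContDiff ℝ 1 u) (s t : ℝ) :
    HasDerivAt (fun y => u (s, y)) (pdT u (s, t)) t := by
  have h := ((hu.differentiable one_ne_zero) (s, t)).hasFDerivAt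
  have hl : HasDerivAt (fun y : ℝ => (s, y)) ((0 : ℝ), (1 : ℝ)) t :=
    (hasDerivAt_const t s).prodMk (hasDerivAt_id t)
  have h2 := h.comp_hasDerivAt t hl
  have he : pdT u (s, t) = fderiv ℝ u (s, t) (0, 1) := h2.deriv
  rw [he]; exact h2

lemma continuous_pdS (hu : ContDiff ℝ 1 u) : Continuous (pdS u) := by
  have he : pdS u = fun p => fderiv ℝ u p (1, 0) := by
    funext p
    obtain ⟨s, t⟩ := p
    exact (((hu.differentiable one_ne_zero) (s, t)).hasFDerivAt.comp_hasDerivAt s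
      ((hasDerivAt_id s).prodMk (hasDerivAt_const s t))).deriv
  rw [he]
  exact (hu.continuous_fderiv one_ne_zero).clm_apply continuous_const

lemma continuous_pdT (hu : ContDiff ℝ 1 u) : Continuous (pdT u) := by
  have he : pdT u = fun p => fderiv ℝ u p (0, 1) := by
    funext p
    obtain ⟨s, t⟩ := p
    exact (((hu.differentiable one_ne_zero) (s, t)).hasFDerivAt.comp_hasDerivAt t
      ((hasDerivAt_const t s).prodMk (hasDerivAt_id t))).deriv
  rw [he]
  exact (hu.continuous_fderiv one_ne_zero).clm_apply continuous_const

/-- The key pointwise algebraic identity for the energy splitting. -/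
lemma pointwise_split (b lam a a' a'' : ℝ) (hb : b ≠ 0)
    (hode : a'' = lam ^ 2 * a - (1 / b) * (1 - a ^ 2) * a) (U Us Ut E : ℂ)
    (hE : ‖E‖ = 1) :
    ‖E * a * (Us - Complex.I * lam * U)‖ ^ 2
      + ‖E * ((a' : ℂ) * U + (a : ℂ) * Ut)‖ ^ 2
      - (1 / (2 * b)) * (2 * ‖(a : ℂ) * U * E‖ ^ 2 - ‖(a : ℂ) * U * E‖ ^ 4)
    = a ^ 2 * (‖Ut‖ ^ 2 + ‖Us‖ ^ 2 - 2 * lam * ((starRingEnd ℂ) U * Us).im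
        + (1 / (2 * b)) * a ^ 2 * (1 - ‖U‖ ^ 2) ^ 2) - (1 / (2 * b)) * a ^ 4
      + ((a' ^ 2 + a * a'') * ‖U‖ ^ 2
          + a * a' * (2 * ((starRingEnd ℂ) U * Ut).re)) := by
  have hn2 : ∀ z : ℂ, ‖z‖ ^ 2 = z.re ^ 2 + z.im ^ 2 := by
    intro z
    rw [Complex.sq_norm, Complex.normSq_apply]; ring
  have hn4 : ∀ z : ℂ, ‖z‖ ^ 4 = (z.re ^ 2 + z.im ^ 2) ^ 2 := by
    intro z; rw [show (4:ℕ) = 2 * 2 from rfl, pow_mul, hn2]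
  have ha4 : |a| ^ 4 = (a ^ 2) ^ 2 := by
    rw [show (4:ℕ) = 2 * 2 from rfl, pow_mul, _root_.sq_abs]
  simp only [norm_mul, hE, one_mul, mul_one, Complex.norm_real, Real.norm_eq_abs,
    mul_pow, _root_.sq_abs, ha4]
  simp only [hn2, hn4]
  simp only [Complex.mul_re, Complex.mul_im, Complex.sub_re, Complex.sub_im,
    Complex.add_re, Complex.add_im, Complex.I_re, Complex.I_im,
    Complex.ofReal_re, Complex.ofReal_im, Complex.conj_re, Complex.conj_im]
  subst hode
  field_simp
  ring

end helpers

theorem energy_splitting (b L ℓ α₀ : ℝ) (hb : 1 < b) (hL : 0 < L) (hℓ : 0 < ℓ)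
    (f₀ : ℝ → ℝ) (hreg : ContDiff ℝ 2 f₀)
    (hpos : ∀ t ∈ Set.Icc (0:ℝ) ℓ, 0 < f₀ t)
    (hode : ∀ t ∈ Set.Icc (0:ℝ) ℓ,
      -(deriv (deriv f₀) t) + (t + α₀) ^ 2 * f₀ t = (1 / b) * (1 - f₀ t ^ 2) * f₀ t)
    (hneu0 : deriv f₀ 0 = 0) (hneuℓ : deriv f₀ ℓ = 0)
    (u : ℝ × ℝ → ℂ) (hu : ContDiff ℝ 1 u) :
    GLrect b L ℓ (fun p => (f₀ p.2 : ℂ) * u p *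
        Complex.exp (Complex.I * ((-α₀ * p.1 - p.1 * p.2 / 2 : ℝ) : ℂ)))
      = -(1 / (2 * b)) * (∫ s in (0:ℝ)..L, ∫ t in (0:ℝ)..ℓ, f₀ t ^ 4)
        + E0 b L ℓ α₀ f₀ u := by
  have hb0 : b ≠ 0 := by positivity
  have hf₀d : Differentiable ℝ f₀ := hreg.differentiable (by norm_num)
  have hderiv1 : ContDiff ℝ 1 (deriv f₀) :=
    (contDiff_succ_iff_deriv.mp (hreg.of_le (by norm_num))).2.2
  have hf'c : Continuous (deriv f₀) := hderiv1.continuous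
  have hf''c : Continuous (deriv (deriv f₀)) := hderiv1.continuous_deriv le_rfl
  have huc : Continuous u := hu.continuous
  have hpSc : Continuous (pdS u) := continuous_pdS hu
  have hpTc : Continuous (pdT u) := continuous_pdT hu
  set ψ : ℝ × ℝ → ℂ := fun p => (f₀ p.2 : ℂ) * u p *
      Complex.exp (Complex.I * ((-α₀ * p.1 - p.1 * p.2 / 2 : ℝ) : ℂ)) with hψdef
  -- notation for the exponential factor
  set E : ℝ → ℝ → ℂ := fun s t => Complex.exp (Complex.I * ((-α₀ * s - s * t / 2 : ℝ) : ℂ))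
    with hEdef
  have hEnorm : ∀ s t, ‖E s t‖ = 1 := by
    intro s t
    rw [hEdef]
    show ‖Complex.exp (Complex.I * ((-α₀ * s - s * t / 2 : ℝ) : ℂ))‖ = 1
    rw [mul_comm]; exact Complex.norm_exp_ofReal_mul_I _
  -- the two covariant derivative computations
  have hψS : ∀ s t, pdS ψ (s, t) + Complex.I * (-(t / 2) : ℝ) * ψ (s, t)
      = E s t * (f₀ t : ℂ) * (pdS u (s, t) - Complex.I * ((t + α₀ : ℝ) : ℂ) * u (s, t)) := by
    intro s t
    have harg : HasDerivAt (fun x : ℝ => (-α₀ * x - x * t / 2 : ℝ)) (-α₀ - t / 2) s := by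
      exact (((hasDerivAt_id s).const_mul (-α₀)).sub
        (((hasDerivAt_id s).mul_const t).div_const 2)).congr_deriv (by ring)
    have hexp := ((harg.ofReal_comp).const_mul Complex.I).cexp
    have hfull := ((hasDerivAt_slice_s hu s t).const_mul ((f₀ t : ℝ) : ℂ)).mul hexp
    have hd : pdS ψ (s, t)
        = (f₀ t : ℂ) * pdS u (s, t) * Complex.exp (Complex.I * ((-α₀ * s - s * t / 2 : ℝ) : ℂ))
          + ((f₀ t : ℂ) * u (s, t)) *
            (Complex.exp (Complex.I * ((-α₀ * s - s * t / 2 : ℝ) : ℂ)) *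
              (Complex.I * ((-α₀ - t / 2 : ℝ) : ℂ))) := hfull.deriv
    rw [hd, hψdef, hEdef]
    push_cast
    ring
  have hψT : ∀ s t, pdT ψ (s, t) + Complex.I * ((s / 2 : ℝ) : ℂ) * ψ (s, t)
      = E s t * (((deriv f₀ t : ℝ) : ℂ) * u (s, t) + (f₀ t : ℂ) * pdT u (s, t)) := by
    intro s t
    have harg : HasDerivAt (fun y : ℝ => (-α₀ * s - s * y / 2 : ℝ)) (-(s / 2)) t := by
      have := (hasDerivAt_const t (-α₀ * s)).sub (((hasDerivAt_id t).const_mul s).div_const 2)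
      exact this.congr_deriv (by ring)
    have hexp := ((harg.ofReal_comp).const_mul Complex.I).cexp
    have hf : HasDerivAt (fun y : ℝ => ((f₀ y : ℝ) : ℂ)) ((deriv f₀ t : ℝ) : ℂ) t :=
      ((hf₀d t).hasDerivAt).ofReal_comp
    have hfull := (hf.mul (hasDerivAt_slice_t hu s t)).mul hexp
    have hd : pdT ψ (s, t)
        = (((deriv f₀ t : ℝ) : ℂ) * u (s, t) + (f₀ t : ℂ) * pdT u (s, t)) *
            Complex.exp (Complex.I * ((-α₀ * s - s * t / 2 : ℝ) : ℂ))
          + ((f₀ t : ℂ) * u (s, t)) *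
            (Complex.exp (Complex.I * ((-α₀ * s - s * t / 2 : ℝ) : ℂ)) *
              (Complex.I * ((-(s / 2) : ℝ) : ℂ))) := hfull.deriv
    rw [hd, hψdef, hEdef]
    push_cast
    ring
  have hψval : ∀ s t, ψ (s, t) = (f₀ t : ℂ) * u (s, t) * E s t := fun s t => rfl
  -- the per-point splitting with exact derivative term
  set G : ℝ → ℝ → ℝ := fun s t =>
    ((deriv f₀ t) ^ 2 + f₀ t * deriv (deriv f₀) t) * ‖u (s, t)‖ ^ 2
      + f₀ t * deriv f₀ t * (2 * ((starRingEnd ℂ) (u (s, t)) * pdT u (s, t)).re)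
    with hGdef
  have hpoint : ∀ s : ℝ, ∀ t ∈ Set.Icc (0:ℝ) ℓ,
      (‖pdS ψ (s, t) + Complex.I * (-(t / 2) : ℝ) * ψ (s, t)‖ ^ 2
        + ‖pdT ψ (s, t) + Complex.I * ((s / 2 : ℝ) : ℂ) * ψ (s, t)‖ ^ 2
        - (1 / (2 * b)) * (2 * ‖ψ (s, t)‖ ^ 2 - ‖ψ (s, t)‖ ^ 4))
      = (f₀ t ^ 2 * (‖pdT u (s, t)‖ ^ 2 + ‖pdS u (s, t)‖ ^ 2
          - 2 * (t + α₀) * ((starRingEnd ℂ) (u (s, t)) * pdS u (s, t)).im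
          + (1 / (2 * b)) * f₀ t ^ 2 * (1 - ‖u (s, t)‖ ^ 2) ^ 2)
        - (1 / (2 * b)) * f₀ t ^ 4) + G s t := by
    intro s t ht
    have hode' : deriv (deriv f₀) t
        = (t + α₀) ^ 2 * f₀ t - (1 / b) * (1 - f₀ t ^ 2) * f₀ t := by
      have := hode t ht
      linarith
    have key := pointwise_split b (t + α₀) (f₀ t) (deriv f₀ t) (deriv (deriv f₀) t) hb0
      hode' (u (s, t)) (pdS u (s, t)) (pdT u (s, t)) (E s t) (hEnorm s t)
    rw [hψS s t, hψT s t, hψval s t]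
    rw [hGdef]
    calc ‖E s t * (f₀ t : ℂ) * (pdS u (s, t) - Complex.I * ((t + α₀ : ℝ) : ℂ) * u (s, t))‖ ^ 2
          + ‖E s t * (((deriv f₀ t : ℝ) : ℂ) * u (s, t) + (f₀ t : ℂ) * pdT u (s, t))‖ ^ 2
          - (1 / (2 * b)) * (2 * ‖(f₀ t : ℂ) * u (s, t) * E s t‖ ^ 2
            - ‖(f₀ t : ℂ) * u (s, t) * E s t‖ ^ 4)
        = ‖E s t * (f₀ t : ℂ) * (pdS u (s, t) - Complex.I * ((t + α₀ : ℝ)) * u (s, t))‖ ^ 2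
          + ‖E s t * (((deriv f₀ t : ℝ) : ℂ) * u (s, t) + (f₀ t : ℂ) * pdT u (s, t))‖ ^ 2
          - (1 / (2 * b)) * (2 * ‖(f₀ t : ℂ) * u (s, t) * E s t‖ ^ 2
            - ‖(f₀ t : ℂ) * u (s, t) * E s t‖ ^ 4) := rfl
      _ = _ := by rw [key]
  -- FTC: the derivative term integrates to zero in t
  have hGzero : ∀ s : ℝ, ∫ t in (0:ℝ)..ℓ, G s t = 0 := by
    intro s
    have hg : ∀ t : ℝ, HasDerivAt (fun y => f₀ y * deriv f₀ y * ‖u (s, y)‖ ^ 2) (G s t) t := by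
      intro t
      have hf : HasDerivAt f₀ (deriv f₀ t) t := (hf₀d t).hasDerivAt
      have hf' : HasDerivAt (deriv f₀) (deriv (deriv f₀) t) t :=
        ((hderiv1.differentiable one_ne_zero) t).hasDerivAt
      have hut := hasDerivAt_slice_t hu s t
      have hre : HasDerivAt (fun y => (u (s, y)).re) ((pdT u (s, t)).re) t :=
        Complex.reCLM.hasFDerivAt.comp_hasDerivAt t hut
      have him : HasDerivAt (fun y => (u (s, y)).im) ((pdT u (s, t)).im) t :=
        Complex.imCLM.hasFDerivAt.comp_hasDerivAt t hut
      have hnormsq : HasDerivAt (fun y => ‖u (s, y)‖ ^ 2)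
          (2 * ((starRingEnd ℂ) (u (s, t)) * pdT u (s, t)).re) t := by
        have heq : (fun y => ‖u (s, y)‖ ^ 2)
            = fun y => (u (s, y)).re * (u (s, y)).re + (u (s, y)).im * (u (s, y)).im := by
          funext y
          rw [Complex.sq_norm, Complex.normSq_apply]
        rw [heq]
        have h1 := (hre.mul hre).add (him.mul him)
        exact h1.congr_deriv (by rw [Complex.mul_re, Complex.conj_re, Complex.conj_im]; ring)
      have h2 := (hf.mul hf').mul hnormsq
      exact h2.congr_deriv (by simp only [hGdef, Pi.mul_apply]; ring)
    have hGc : Continuous (G s) := by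
      rw [hGdef]
      have h1 : Continuous fun t : ℝ => u (s, t) :=
        huc.comp (continuous_const.prodMk continuous_id)
      have h2 : Continuous fun t : ℝ => pdT u (s, t) :=
        hpTc.comp (continuous_const.prodMk continuous_id)
      fun_prop
    have hGi : IntervalIntegrable (G s) volume 0 ℓ := hGc.intervalIntegrable 0 ℓ
    rw [intervalIntegral.integral_eq_sub_of_hasDerivAt (fun t _ => hg t) hGi]
    simp [hneu0, hneuℓ]
  -- continuity of the reduced integrand
  have hE0c : Continuous (fun p : ℝ × ℝ =>
      f₀ p.2 ^ 2 * (‖pdT u p‖ ^ 2 + ‖pdS u p‖ ^ 2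
        - 2 * (p.2 + α₀) * ((starRingEnd ℂ) (u p) * pdS u p).im
        + (1 / (2 * b)) * f₀ p.2 ^ 2 * (1 - ‖u p‖ ^ 2) ^ 2)) := by
    have hfc := hreg.continuous
    fun_prop
  -- inner integral identity, for every s
  have hinner : ∀ s : ℝ,
      (∫ t in (0:ℝ)..ℓ,
        (‖pdS ψ (s, t) + Complex.I * (-(t / 2) : ℝ) * ψ (s, t)‖ ^ 2
          + ‖pdT ψ (s, t) + Complex.I * ((s / 2 : ℝ) : ℂ) * ψ (s, t)‖ ^ 2
          - (1 / (2 * b)) * (2 * ‖ψ (s, t)‖ ^ 2 - ‖ψ (s, t)‖ ^ 4)))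
      = (∫ t in (0:ℝ)..ℓ,
          f₀ t ^ 2 * (‖pdT u (s, t)‖ ^ 2 + ‖pdS u (s, t)‖ ^ 2
            - 2 * (t + α₀) * ((starRingEnd ℂ) (u (s, t)) * pdS u (s, t)).im
            + (1 / (2 * b)) * f₀ t ^ 2 * (1 - ‖u (s, t)‖ ^ 2) ^ 2))
        - (1 / (2 * b)) * ∫ t in (0:ℝ)..ℓ, f₀ t ^ 4 := by
    intro s
    have hA : IntervalIntegrable (fun t =>
        f₀ t ^ 2 * (‖pdT u (s, t)‖ ^ 2 + ‖pdS u (s, t)‖ ^ 2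
          - 2 * (t + α₀) * ((starRingEnd ℂ) (u (s, t)) * pdS u (s, t)).im
          + (1 / (2 * b)) * f₀ t ^ 2 * (1 - ‖u (s, t)‖ ^ 2) ^ 2)) volume 0 ℓ := by
      exact (hE0c.comp (continuous_const.prodMk continuous_id)).intervalIntegrable 0 ℓ
    have hB : IntervalIntegrable (fun t => (1 / (2 * b)) * f₀ t ^ 4) volume 0 ℓ := by
      have := hreg.continuous
      exact (by fun_prop : Continuous fun t => (1 / (2 * b)) * f₀ t ^ 4).intervalIntegrable 0 ℓ
    have hGc : Continuous (G s) := by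
      rw [hGdef]
      have h1 : Continuous fun t : ℝ => u (s, t) :=
        huc.comp (continuous_const.prodMk continuous_id)
      have h2 : Continuous fun t : ℝ => pdT u (s, t) :=
        hpTc.comp (continuous_const.prodMk continuous_id)
      fun_prop
    have hGi : IntervalIntegrable (G s) volume 0 ℓ := hGc.intervalIntegrable 0 ℓ
    have hcongr : (∫ t in (0:ℝ)..ℓ,
        (‖pdS ψ (s, t) + Complex.I * (-(t / 2) : ℝ) * ψ (s, t)‖ ^ 2
          + ‖pdT ψ (s, t) + Complex.I * ((s / 2 : ℝ) : ℂ) * ψ (s, t)‖ ^ 2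
          - (1 / (2 * b)) * (2 * ‖ψ (s, t)‖ ^ 2 - ‖ψ (s, t)‖ ^ 4)))
        = ∫ t in (0:ℝ)..ℓ,
          ((f₀ t ^ 2 * (‖pdT u (s, t)‖ ^ 2 + ‖pdS u (s, t)‖ ^ 2
              - 2 * (t + α₀) * ((starRingEnd ℂ) (u (s, t)) * pdS u (s, t)).im
              + (1 / (2 * b)) * f₀ t ^ 2 * (1 - ‖u (s, t)‖ ^ 2) ^ 2)
            - (1 / (2 * b)) * f₀ t ^ 4) + G s t) := by
      apply intervalIntegral.integral_congr
      intro t ht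
      rw [Set.uIcc_of_le hℓ.le] at ht
      exact hpoint s t ht
    rw [hcongr, intervalIntegral.integral_add ((hA.sub hB)) hGi, hGzero s, add_zero,
      intervalIntegral.integral_sub hA hB, intervalIntegral.integral_const_mul]
  -- assemble the outer integral
  rw [GLrect, E0]
  have houter : (∫ s in (0:ℝ)..L, ∫ t in (0:ℝ)..ℓ,
      (‖pdS ψ (s, t) + Complex.I * (-(t / 2) : ℝ) * ψ (s, t)‖ ^ 2
        + ‖pdT ψ (s, t) + Complex.I * ((s / 2 : ℝ) : ℂ) * ψ (s, t)‖ ^ 2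
        - (1 / (2 * b)) * (2 * ‖ψ (s, t)‖ ^ 2 - ‖ψ (s, t)‖ ^ 4)))
      = ∫ s in (0:ℝ)..L,
        ((∫ t in (0:ℝ)..ℓ,
          f₀ t ^ 2 * (‖pdT u (s, t)‖ ^ 2 + ‖pdS u (s, t)‖ ^ 2
            - 2 * (t + α₀) * ((starRingEnd ℂ) (u (s, t)) * pdS u (s, t)).im
            + (1 / (2 * b)) * f₀ t ^ 2 * (1 - ‖u (s, t)‖ ^ 2) ^ 2))
          - (1 / (2 * b)) * ∫ t in (0:ℝ)..ℓ, f₀ t ^ 4) := by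
    apply intervalIntegral.integral_congr
    intro s _
    exact hinner s
  rw [houter]
  have hAcont : Continuous fun s => ∫ t in (0:ℝ)..ℓ,
      f₀ t ^ 2 * (‖pdT u (s, t)‖ ^ 2 + ‖pdS u (s, t)‖ ^ 2
        - 2 * (t + α₀) * ((starRingEnd ℂ) (u (s, t)) * pdS u (s, t)).im
        + (1 / (2 * b)) * f₀ t ^ 2 * (1 - ‖u (s, t)‖ ^ 2) ^ 2) := by
    apply intervalIntegral.continuous_parametric_intervalIntegral_of_continuous'
    exact hE0c.comp (continuous_fst.prodMk continuous_snd)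
  have hAint : IntervalIntegrable (fun s => ∫ t in (0:ℝ)..ℓ,
      f₀ t ^ 2 * (‖pdT u (s, t)‖ ^ 2 + ‖pdS u (s, t)‖ ^ 2
        - 2 * (t + α₀) * ((starRingEnd ℂ) (u (s, t)) * pdS u (s, t)).im
        + (1 / (2 * b)) * f₀ t ^ 2 * (1 - ‖u (s, t)‖ ^ 2) ^ 2)) volume 0 L :=
    hAcont.intervalIntegrable 0 L
  rw [intervalIntegral.integral_sub hAint (intervalIntegrable_const),
    intervalIntegral.integral_const, intervalIntegral.integral_const]
  simp only [sub_zero, smul_eq_mul]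
  ring
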